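/- Let V be a finite set, R a commutative ring, and f, g : 2^V → R. Define the union product (f ∪ g)(X) := Σ_{A ∪ B = X} f(A)·g(B), where the sum is over all pairs (A, B) of subsets with A ∪ B = X. Then ζ(f ∪ g) = (ζf)·(ζg) pointwise, i.e., for all X ⊆ V, Σ_{Y ⊆ X} (f ∪ g)(Y) = (Σ_{Y ⊆ X} f(Y)) · (Σ_{Y ⊆ X} g(Y)). Consequently f ∪ g = μ((ζf)·(ζg)). -/
import Mathlib

open Finset

/-- The zeta transform `(ζf)(X) = Σ_{Y ⊆ X} f(Y)`. -/
def zetaT {V R : Type*} [DecidableEq V] [CommRing R] (f : Finset V → R)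
    (X : Finset V) : R :=
  ∑ Y ∈ X.powerset, f Y

/-- The Moebius transform `(μf)(X) = Σ_{Y ⊆ X} (-1)^{|X \ Y|} f(Y)`. -/
def moebiusT {V R : Type*} [DecidableEq V] [CommRing R] (f : Finset V → R)
    (X : Finset V) : R :=
  ∑ Y ∈ X.powerset, (-1 : R) ^ (X \ Y).card * f Y

/-- The union (cover) product `(f ∪ g)(X) = Σ_{A ∪ B = X} f(A)·g(B)`. -/
def unionProd {V R : Type*} [DecidableEq V] [CommRing R] (f g : Finset V → R)
    (X : Finset V) : R :=
  ∑ p ∈ (X.powerset ×ˢ X.powerset).filter (fun p => p.1 ∪ p.2 = X),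
    f p.1 * g p.2

private lemma aux_sum_neg_one {V R : Type*} [DecidableEq V] [CommRing R] (s : Finset V) :
    ∑ t ∈ s.powerset, (-1 : R) ^ t.card = if s = ∅ then 1 else 0 := by
  have h := congrArg (Int.cast : ℤ → R) (Finset.sum_powerset_neg_one_pow_card (x := s))
  push_cast at h
  convert h using 2

private lemma aux_inner {V R : Type*} [DecidableEq V] [CommRing R] {X Z : Finset V}
    (hZ : Z ⊆ X) :
    ∑ Y ∈ X.powerset.filter (fun Y => Z ⊆ Y), (-1 : R) ^ (X \ Y).card
      = if Z = X then 1 else 0 := by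
  have key : ∑ Y ∈ X.powerset.filter (fun Y => Z ⊆ Y), (-1 : R) ^ (X \ Y).card
      = ∑ t ∈ (X \ Z).powerset, (-1 : R) ^ t.card := by
    refine Finset.sum_bij' (fun Y _ => X \ Y) (fun t _ => X \ t) ?_ ?_ ?_ ?_ ?_
    · intro Y hY
      simp only [mem_filter, mem_powerset] at hY
      exact mem_powerset.2 (sdiff_subset_sdiff le_rfl hY.2)
    · intro t ht
      simp only [mem_powerset] at ht
      refine mem_filter.2 ⟨mem_powerset.2 sdiff_subset, ?_⟩
      intro z hz
      simp only [mem_sdiff]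
      exact ⟨hZ hz, fun h => (mem_sdiff.1 (ht h)).2 hz⟩
    · intro Y hY
      simp only [mem_filter, mem_powerset] at hY
      exact Finset.sdiff_sdiff_eq_self hY.1
    · intro t ht
      simp only [mem_powerset] at ht
      exact Finset.sdiff_sdiff_eq_self (ht.trans sdiff_subset)
    · intro Y hY; rfl
  rw [key, aux_sum_neg_one]
  congr 1
  simp only [eq_iff_iff, sdiff_eq_empty_iff_subset]
  exact ⟨fun h => le_antisymm hZ h, fun h => h ▸ le_rfl⟩

private lemma moebius_zeta {V R : Type*} [DecidableEq V] [CommRing R]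
    (h : Finset V → R) (X : Finset V) : moebiusT (zetaT h) X = h X := by
  unfold moebiusT zetaT
  have step1 : ∀ Y ∈ X.powerset,
      (-1 : R) ^ (X \ Y).card * ∑ Z ∈ Y.powerset, h Z
        = ∑ Z ∈ X.powerset, if Z ⊆ Y then (-1 : R) ^ (X \ Y).card * h Z else 0 := by
    intro Y hY
    rw [Finset.mul_sum, ← Finset.sum_filter]
    congr 1
    ext Z
    simp only [mem_powerset, mem_filter]
    exact ⟨fun hZ => ⟨hZ.trans (mem_powerset.1 hY), hZ⟩, fun hZ => hZ.2⟩
  rw [Finset.sum_congr rfl step1, Finset.sum_comm]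
  have step2 : ∀ Z ∈ X.powerset,
      (∑ Y ∈ X.powerset, if Z ⊆ Y then (-1 : R) ^ (X \ Y).card * h Z else 0)
        = (if Z = X then 1 else 0) * h Z := by
    intro Z hZ
    rw [← Finset.sum_filter, ← Finset.sum_mul, aux_inner (mem_powerset.1 hZ)]
  rw [Finset.sum_congr rfl step2]
  rw [Finset.sum_eq_single X (fun Z _ hne => by rw [if_neg hne, zero_mul])
    (fun hX => absurd (mem_powerset.2 le_rfl) hX)]
  rw [if_pos rfl, one_mul]

private lemma zeta_union {V R : Type*} [DecidableEq V] [CommRing R]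
    (f g : Finset V → R) (X : Finset V) :
    zetaT (unionProd f g) X = zetaT f X * zetaT g X := by
  unfold zetaT unionProd
  rw [Finset.sum_mul_sum, ← Finset.sum_product']
  have step : ∀ Y ∈ X.powerset,
      (∑ p ∈ (Y.powerset ×ˢ Y.powerset).filter (fun p => p.1 ∪ p.2 = Y), f p.1 * g p.2)
        = ∑ p ∈ (X.powerset ×ˢ X.powerset).filter
            (fun p : Finset V × Finset V => p.1 ∪ p.2 = Y), f p.1 * g p.2 := by
    intro Y hY
    have hYX := mem_powerset.1 hY
    congr 1
    ext p
    simp only [mem_filter, mem_product, mem_powerset]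
    constructor
    · rintro ⟨⟨h1, h2⟩, h3⟩
      exact ⟨⟨h1.trans hYX, h2.trans hYX⟩, h3⟩
    · rintro ⟨_, h3⟩
      exact ⟨⟨h3 ▸ subset_union_left, h3 ▸ subset_union_right⟩, h3⟩
  rw [Finset.sum_congr rfl step]
  exact Finset.sum_fiberwise_of_maps_to (fun p hp => by
    simp only [mem_product, mem_powerset] at hp
    exact mem_powerset.2 (union_subset hp.1 hp.2)) _

theorem stmt_12 {V R : Type*} [DecidableEq V] [Fintype V] [CommRing R]
    (f g : Finset V → R) :
    (∀ X : Finset V, zetaT (unionProd f g) X = zetaT f X * zetaT g X) ∧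
    unionProd f g = moebiusT (fun X => zetaT f X * zetaT g X) := by
  refine ⟨zeta_union f g, ?_⟩
  funext X
  have := moebius_zeta (unionProd f g) X
  rw [← this]
  unfold moebiusT
  exact Finset.sum_congr rfl fun Y _ => by rw [zeta_union]
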